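/- On complex projective space ℂP^m (m = k+l+1 ≥ 2) with the Fubini–Study metric g, the function τ([x,y]) = |y|²/(|x|² + |y|²), where x ∈ ℂ^{k+1}, y ∈ ℂ^{l+1}, satisfies g(grad τ, grad τ) = 4(1−τ)τ. In particular τ has geodesic gradient, and its critical set is the disjoint union of the linear subvarieties ℂP^k = {y = 0} and ℂP^l = {x = 0}. -/

import Mathlib

open Manifold
noncomputable section

variable {EV : Type*} [NormedAddCommGroup EV] [NormedSpace ℝ EV]
  {M : Type*} [TopologicalSpace M] [ChartedSpace EV M]
  [IsManifold 𝓘(ℝ, EV) (⊤ : ℕ∞) M]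

/-- The (manifold) differential of a real-valued function, applied to a tangent
vector (tangent spaces being canonically identified with the model space `EV`). -/
def mdiff (f : M → ℝ) (x : M) (w : EV) : ℝ :=
  mfderiv 𝓘(ℝ, EV) 𝓘(ℝ, ℝ) f x w

/-- A Riemannian metric together with its gradient operator and Levi-Civita
connection on a smooth manifold `M` modeled on `EV`. -/
structure RiemannData (EV : Type*) [NormedAddCommGroup EV] [NormedSpace ℝ EV]
    (M : Type*) [TopologicalSpace M] [ChartedSpace EV M]
    [IsManifold 𝓘(ℝ, EV) (⊤ : ℕ∞) M] where
  /-- the Riemannian metric -/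
  g : M → EV →L[ℝ] EV →L[ℝ] ℝ
  g_symm : ∀ x a b, g x a b = g x b a
  g_posdef : ∀ (x : M) (a : EV), a ≠ 0 → 0 < g x a a
  g_smooth : ∀ X Y : M → EV, ContMDiff 𝓘(ℝ, EV) 𝓘(ℝ, EV) (⊤ : ℕ∞) X →
    ContMDiff 𝓘(ℝ, EV) 𝓘(ℝ, EV) (⊤ : ℕ∞) Y →
    ContMDiff 𝓘(ℝ, EV) 𝓘(ℝ, ℝ) (⊤ : ℕ∞) (fun x => g x (X x) (Y x))
  /-- the gradient of a function, characterized by the metric -/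
  grad : (M → ℝ) → M → EV
  grad_spec : ∀ (f : M → ℝ), ContMDiff 𝓘(ℝ, EV) 𝓘(ℝ, ℝ) (⊤ : ℕ∞) f →
    ∀ (x : M) (w : EV), g x (grad f x) w = mdiff f x w
  /-- the Levi-Civita connection, acting on vector fields (written in the
  canonical identification of tangent spaces with `EV`) -/
  conn : (M → EV) → (M → EV) → (M → EV)
  conn_add : ∀ X Y Z, conn X (fun y => Y y + Z y) = fun y => conn X Y y + conn X Z y
  conn_tensorial : ∀ (h : M → ℝ) (X Y : M → EV) (x : M),
    conn (fun y => h y • X y) Y x = h x • conn X Y x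
  conn_leibniz : ∀ (h : M → ℝ) (X Y : M → EV) (x : M),
    ContMDiff 𝓘(ℝ, EV) 𝓘(ℝ, ℝ) (⊤ : ℕ∞) h →
    conn X (fun y => h y • Y y) x = (mdiff h x (X x)) • Y x + h x • conn X Y x
  conn_metric : ∀ (X Y Z : M → EV) (x : M),
    ContMDiff 𝓘(ℝ, EV) 𝓘(ℝ, EV) (⊤ : ℕ∞) Y → ContMDiff 𝓘(ℝ, EV) 𝓘(ℝ, EV) (⊤ : ℕ∞) Z →
    mdiff (fun y => g y (Y y) (Z y)) x (X x)
      = g x (conn X Y x) (Z x) + g x (Y x) (conn X Z x)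
  conn_torsionFree : ∀ (X Y : M → EV) (f : M → ℝ) (x : M),
    ContMDiff 𝓘(ℝ, EV) 𝓘(ℝ, EV) (⊤ : ℕ∞) X → ContMDiff 𝓘(ℝ, EV) 𝓘(ℝ, EV) (⊤ : ℕ∞) Y →
    ContMDiff 𝓘(ℝ, EV) 𝓘(ℝ, ℝ) (⊤ : ℕ∞) f →
    mdiff f x (conn X Y x - conn Y X x)
      = mdiff (fun y => mdiff f y (Y y)) x (X x)
        - mdiff (fun y => mdiff f y (X y)) x (Y x)

/-! ### Auxiliary material for the Fubini–Study computation -/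

section Aux

open ComplexConjugate

/-- The model space `ℂ^{k+1} × ℂ^{l+1}`. -/
abbrev Esp (k l : ℕ) := EuclideanSpace ℂ (Fin (k+1) ⊕ Fin (l+1))

/-- Orthogonal projection onto the `y`-coordinates. -/
def Pmap (k l : ℕ) : Esp k l →L[ℂ] Esp k l :=
  LinearMap.toContinuousLinearMap
    { toFun := fun z => WithLp.toLp 2 (fun i => Sum.elim (fun _ => (0:ℂ)) (fun j => z (Sum.inr j)) i)
      map_add' := by intro a b; ext i; cases i <;> simp
      map_smul' := by intro c a; ext i; cases i <;> simp }

/-- `τ` upstairs, as a function on `ℂ^{k+1} × ℂ^{l+1}`. -/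
def tauhat (k l : ℕ) (z : Esp k l) : ℝ :=
  (∑ j : Fin (l+1), ‖z (Sum.inr j)‖^2)
    / ((∑ i : Fin (k+1), ‖z (Sum.inl i)‖^2) + ∑ j : Fin (l+1), ‖z (Sum.inr j)‖^2)

lemma norm_sq_split (k l : ℕ) (z : Esp k l) :
    ‖z‖^2 = (∑ i : Fin (k+1), ‖z (Sum.inl i)‖^2) + ∑ j : Fin (l+1), ‖z (Sum.inr j)‖^2 := by
  rw [EuclideanSpace.norm_eq, Real.sq_sqrt (by positivity), Fintype.sum_sum_type]

lemma Pmap_inner (k l : ℕ) (z w : Esp k l) :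
    (inner ℂ (Pmap k l z) w : ℂ) = ∑ j : Fin (l+1), conj (z (Sum.inr j)) * w (Sum.inr j) := by
  rw [PiLp.inner_apply, Fintype.sum_sum_type]
  simp [RCLike.inner_apply, Pmap]
  exact Finset.sum_congr rfl fun _ _ => mul_comm _ _

lemma inner_Pmap (k l : ℕ) (z w : Esp k l) :
    (inner ℂ z (Pmap k l w) : ℂ) = ∑ j : Fin (l+1), conj (z (Sum.inr j)) * w (Sum.inr j) := by
  rw [PiLp.inner_apply, Fintype.sum_sum_type]
  simp [RCLike.inner_apply, Pmap]
  exact Finset.sum_congr rfl fun _ _ => mul_comm _ _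

lemma Pmap_inner_self (k l : ℕ) (z : Esp k l) :
    (inner ℂ (Pmap k l z) z : ℂ) = ((∑ j : Fin (l+1), ‖z (Sum.inr j)‖^2 : ℝ) : ℂ) := by
  rw [Pmap_inner]; push_cast; exact Finset.sum_congr rfl fun j _ => RCLike.conj_mul _

lemma inner_Pmap_self (k l : ℕ) (z : Esp k l) :
    (inner ℂ z (Pmap k l z) : ℂ) = ((∑ j : Fin (l+1), ‖z (Sum.inr j)‖^2 : ℝ) : ℂ) := by
  rw [inner_Pmap]; push_cast; exact Finset.sum_congr rfl fun j _ => RCLike.conj_mul _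

lemma Pmap_inner_Pmap (k l : ℕ) (z : Esp k l) :
    (inner ℂ (Pmap k l z) (Pmap k l z) : ℂ)
      = ((∑ j : Fin (l+1), ‖z (Sum.inr j)‖^2 : ℝ) : ℂ) := by
  rw [Pmap_inner]; push_cast
  refine Finset.sum_congr rfl fun j _ => ?_
  show conj (z (Sum.inr j)) * (z (Sum.inr j)) = _
  exact RCLike.conj_mul _

lemma tauhat_eq (k l : ℕ) :
    tauhat k l = fun z => (inner ℂ (Pmap k l z) z : ℂ).re * (((inner ℂ z z : ℂ)).re)⁻¹ := by
  funext z
  rw [tauhat, div_eq_mul_inv, Pmap_inner_self, inner_self_eq_norm_sq_to_K]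
  norm_num [← Complex.ofReal_pow, norm_sq_split]

lemma tauhat_hasFDeriv (k l : ℕ) (z : Esp k l) (hz : ‖z‖ = 1) :
    ∃ φ : Esp k l →L[ℝ] ℝ, HasFDerivAt (tauhat k l) φ z ∧ ∀ w : Esp k l,
      φ w = ((inner ℂ (Pmap k l z) w : ℂ) + (inner ℂ (Pmap k l w) z : ℂ)).re
        - (∑ j : Fin (l+1), ‖z (Sum.inr j)‖^2)
            * ((inner ℂ z w : ℂ) + (inner ℂ w z : ℂ)).re := by
  have hP : HasFDerivAt (fun y : Esp k l => Pmap k l y) ((Pmap k l).restrictScalars ℝ) z :=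
    ((Pmap k l).restrictScalars ℝ).hasFDerivAt
  have hN0 := hP.inner ℂ (hasFDerivAt_id z)
  have hD0 := (hasFDerivAt_id z).inner ℂ (hasFDerivAt_id z)
  have hN := Complex.reCLM.hasFDerivAt.comp z hN0
  have hD := Complex.reCLM.hasFDerivAt.comp z hD0
  simp only [Function.comp, id_eq, Complex.reCLM_apply] at hN hD
  have hden : (inner ℂ z z : ℂ).re = 1 := by
    rw [inner_self_eq_norm_sq_to_K, hz]; norm_num
  have hinv := (hasFDerivAt_inv (x := (inner ℂ z z : ℂ).re)
      (by rw [hden]; norm_num)).comp z hD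
  have hmul := hN.mul hinv
  simp only [Function.comp, id_eq, Complex.reCLM_apply] at hmul
  rw [tauhat_eq]
  refine ⟨_, hmul, fun w => ?_⟩
  have h1 : (inner ℂ (Pmap k l z) z : ℂ).re = ∑ j : Fin (l+1), ‖z (Sum.inr j)‖^2 := by
    rw [Pmap_inner_self]; exact Complex.ofReal_re _
  simp only [ContinuousLinearMap.add_apply, ContinuousLinearMap.smul_apply,
    ContinuousLinearMap.comp_apply, ContinuousLinearMap.smulRight_apply,
    ContinuousLinearMap.one_apply, ContinuousLinearMap.coe_comp', Function.comp,
    fderivInnerCLM_apply, ContinuousLinearMap.prod_apply, ContinuousLinearMap.coe_restrictScalars',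
    ContinuousLinearMap.id_apply, Complex.reCLM_apply, smul_eq_mul, h1, hden,
    Complex.add_re, ContinuousLinearMap.toSpanSingleton_apply]
  ring

lemma surj_aux {E EV : Type*} [NormedAddCommGroup E] [InnerProductSpace ℂ E]
    [FiniteDimensional ℂ E] [NormedAddCommGroup EV] [NormedSpace ℝ EV]
    [FiniteDimensional ℝ EV]
    (W : Submodule ℂ E) (f : E → EV)
    (hadd : ∀ a b : E, f (a + b) = f a + f b)
    (hsmul : ∀ (c : ℝ) (a : E), f (c • a) = c • f a)
    (hinj : ∀ w ∈ W, f w = 0 → w = 0)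
    (hrk : Module.finrank ℝ ↥W = Module.finrank ℝ EV) :
    ∀ u : EV, ∃ w ∈ W, f w = u := by
  haveI : FiniteDimensional ℝ ↥W := Module.Finite.trans (R := ℝ) ℂ ↥W
  let L : ↥W →ₗ[ℝ] EV :=
    { toFun := fun w => f w
      map_add' := by intro a b; exact hadd a b
      map_smul' := by intro c a; exact hsmul c a }
  have hker : LinearMap.ker L = ⊥ := by
    rw [LinearMap.ker_eq_bot']
    intro w hw
    exact Subtype.ext (hinj w w.2 hw)
  have hfr := LinearMap.finrank_range_add_finrank_ker L
  rw [hker] at hfr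
  simp only [finrank_bot, add_zero] at hfr
  have htop : LinearMap.range L = ⊤ :=
    Submodule.eq_top_of_finrank_eq (by rw [hfr, hrk])
  intro u
  obtain ⟨w, hw⟩ := LinearMap.range_eq_top.mp htop u
  exact ⟨w, w.2, hw⟩

end Aux

open ComplexConjugate

open scoped ComplexOrder in
/-- On `ℂP^m` (`m = k+l+1 ≥ 2`) with the Fubini–Study metric
(realized via the Riemannian submersion `π` from the unit sphere of
`ℂ^{k+1} × ℂ^{l+1}`), the function `τ([x,y]) = |y|²/(|x|²+|y|²)` satisfies
`g(grad τ, grad τ) = 4(1−τ)τ`; in particular `τ` has geodesic gradient, and its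
critical set is the disjoint union of the images of `{y = 0}` and `{x = 0}`,
i.e. of the linear subvarieties `ℂP^k` and `ℂP^l`. -/
theorem stmt10 (k l m : ℕ) (hm : m = k + l + 1) (hm2 : 2 ≤ m)
    (hdim : Module.finrank ℝ EV = 2 * m)
    (D : RiemannData EV M)
    (π : EuclideanSpace ℂ (Fin (k+1) ⊕ Fin (l+1)) → M)
    (hπsurj : ∀ p : M, ∃ z, z ≠ 0 ∧ π z = p)
    (hπfib : ∀ z z' : EuclideanSpace ℂ (Fin (k+1) ⊕ Fin (l+1)), z ≠ 0 → z' ≠ 0 →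
      (π z = π z' ↔ ∃ c : ℂ, c ≠ 0 ∧ z' = c • z))
    (hπsmooth : ContMDiffOn 𝓘(ℝ, EuclideanSpace ℂ (Fin (k+1) ⊕ Fin (l+1)))
      𝓘(ℝ, EV) (⊤ : ℕ∞) π {z | z ≠ 0})
    (hFS : ∀ z : EuclideanSpace ℂ (Fin (k+1) ⊕ Fin (l+1)), ‖z‖ = 1 →
      ∀ w w' : EuclideanSpace ℂ (Fin (k+1) ⊕ Fin (l+1)),
        (inner ℂ z w : ℂ) = 0 → (inner ℂ z w' : ℂ) = 0 →
        D.g (π z)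
            (mfderiv 𝓘(ℝ, EuclideanSpace ℂ (Fin (k+1) ⊕ Fin (l+1))) 𝓘(ℝ, EV) π z w)
            (mfderiv 𝓘(ℝ, EuclideanSpace ℂ (Fin (k+1) ⊕ Fin (l+1))) 𝓘(ℝ, EV) π z w')
          = (inner ℂ w w' : ℂ).re)
    (τ : M → ℝ) (hτ : ContMDiff 𝓘(ℝ, EV) 𝓘(ℝ, ℝ) (⊤ : ℕ∞) τ)
    (hτdef : ∀ z : EuclideanSpace ℂ (Fin (k+1) ⊕ Fin (l+1)), z ≠ 0 →
      τ (π z) = (∑ j : Fin (l+1), ‖z (Sum.inr j)‖^2)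
        / ((∑ i : Fin (k+1), ‖z (Sum.inl i)‖^2)
            + ∑ j : Fin (l+1), ‖z (Sum.inr j)‖^2)) :
    (∀ x : M, D.g x (D.grad τ x) (D.grad τ x) = 4 * (1 - τ x) * τ x) ∧
    (∀ (x : M) (a b : EV),
      mdiff (fun y => D.g y (D.grad τ y) (D.grad τ y)) x a * mdiff τ x b
        = mdiff (fun y => D.g y (D.grad τ y) (D.grad τ y)) x b * mdiff τ x a) ∧
    {x : M | D.grad τ x = 0}
      = π '' {z | z ≠ 0 ∧ ∀ j : Fin (l+1), z (Sum.inr j) = 0}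
        ∪ π '' {z | z ≠ 0 ∧ ∀ i : Fin (k+1), z (Sum.inl i) = 0} ∧
    Disjoint (π '' {z | z ≠ 0 ∧ ∀ j : Fin (l+1), z (Sum.inr j) = 0})
      (π '' {z | z ≠ 0 ∧ ∀ i : Fin (k+1), z (Sum.inl i) = 0}) := by
  haveI : FiniteDimensional ℝ EV :=
    FiniteDimensional.of_finrank_pos (by rw [hdim]; omega)
  -- every point has a unit-norm lift
  have norm1 : ∀ p : M, ∃ z : Esp k l, ‖z‖ = 1 ∧ π z = p := by
    intro p
    obtain ⟨z₀, hz0, hπ0⟩ := hπsurj p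
    have hn : ‖z₀‖ ≠ 0 := norm_ne_zero_iff.mpr hz0
    have hc : ((‖z₀‖ : ℂ))⁻¹ ≠ 0 := by
      simp only [ne_eq, inv_eq_zero, Complex.ofReal_eq_zero]; exact hn
    refine ⟨((‖z₀‖ : ℂ))⁻¹ • z₀, ?_, ?_⟩
    · rw [norm_smul]
      simp [hn]
    · have := (hπfib z₀ (((‖z₀‖ : ℂ))⁻¹ • z₀) hz0 (smul_ne_zero hc hz0)).mpr
        ⟨_, hc, rfl⟩
      rw [← this, hπ0]
  -- the main pointwise computation
  have grad_eq : ∀ z : Esp k l, ‖z‖ = 1 →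
      D.g (π z) (D.grad τ (π z)) (D.grad τ (π z)) = 4 * (1 - τ (π z)) * τ (π z) := by
    intro z hz1
    have hz0 : z ≠ 0 := by
      intro h; rw [h, norm_zero] at hz1; norm_num at hz1
    have hsum1 : (∑ i : Fin (k+1), ‖z (Sum.inl i)‖^2)
        + (∑ j : Fin (l+1), ‖z (Sum.inr j)‖^2) = 1 := by
      have := norm_sq_split k l z
      rw [hz1, one_pow] at this; linarith
    have htau : τ (π z) = ∑ j : Fin (l+1), ‖z (Sum.inr j)‖^2 := by
      rw [hτdef z hz0, hsum1, div_one]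
    -- differentiability and chain rule
    have hopen : IsOpen {w : Esp k l | w ≠ 0} := isOpen_ne
    have hmem : {w : Esp k l | w ≠ 0} ∈ nhds z := hopen.mem_nhds hz0
    have hπdiff : MDifferentiableAt 𝓘(ℝ, Esp k l) 𝓘(ℝ, EV) π z :=
      (hπsmooth.contMDiffAt hmem).mdifferentiableAt (by simp)
    have hτdiff : MDifferentiableAt 𝓘(ℝ, EV) 𝓘(ℝ, ℝ) τ (π z) :=
      (hτ (π z)).mdifferentiableAt (by simp)
    have hcomp : mfderiv 𝓘(ℝ, Esp k l) 𝓘(ℝ, ℝ) (τ ∘ π) z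
        = (mfderiv 𝓘(ℝ, EV) 𝓘(ℝ, ℝ) τ (π z)).comp
            (mfderiv 𝓘(ℝ, Esp k l) 𝓘(ℝ, EV) π z) :=
      mfderiv_comp z hτdiff hπdiff
    obtain ⟨φ, hφ, hφval⟩ := tauhat_hasFDeriv k l z hz1
    have hev : (τ ∘ π) =ᶠ[nhds z] tauhat k l := by
      filter_upwards [hmem] with y hy
      exact hτdef y hy
    have hfd : mfderiv 𝓘(ℝ, Esp k l) 𝓘(ℝ, ℝ) (τ ∘ π) z = φ := by
      rw [hev.mfderiv_eq, mfderiv_eq_fderiv, hφ.fderiv]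
    have hkey : ∀ w : Esp k l,
        mfderiv 𝓘(ℝ, EV) 𝓘(ℝ, ℝ) τ (π z)
          (mfderiv 𝓘(ℝ, Esp k l) 𝓘(ℝ, EV) π z w) = φ w := by
      intro w
      have : mfderiv 𝓘(ℝ, Esp k l) 𝓘(ℝ, ℝ) (τ ∘ π) z w
          = mfderiv 𝓘(ℝ, EV) 𝓘(ℝ, ℝ) τ (π z)
              (mfderiv 𝓘(ℝ, Esp k l) 𝓘(ℝ, EV) π z w) := by
        rw [hcomp]; rfl
      rw [← this, hfd]
      rfl
    -- the horizontal gradient vector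
    set S : ℝ := ∑ j : Fin (l+1), ‖z (Sum.inr j)‖^2 with hSdef
    set v : Esp k l := (2:ℂ) • Pmap k l z - ((2 * S : ℝ) : ℂ) • z with hvdef
    have hzz : (inner ℂ z z : ℂ) = 1 := by
      rw [inner_self_eq_norm_sq_to_K, hz1]; norm_num
    have hvz : (inner ℂ z v : ℂ) = 0 := by
      rw [hvdef, inner_sub_right, inner_smul_right, inner_smul_right,
        inner_Pmap_self, hzz, ← hSdef]
      push_cast; ring
    have hvz' : (inner ℂ v z : ℂ) = 0 := by
      rw [← inner_conj_symm, hvz, map_zero]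
    have hφhor : ∀ w : Esp k l, (inner ℂ z w : ℂ) = 0 → φ w = (inner ℂ v w : ℂ).re := by
      intro w hw
      have hw' : (inner ℂ w z : ℂ) = 0 := by
        rw [← inner_conj_symm, hw, map_zero]
      have hPc : (inner ℂ (Pmap k l w) z : ℂ) = conj (inner ℂ (Pmap k l z) w : ℂ) := by
        rw [Pmap_inner, Pmap_inner, map_sum]
        refine Finset.sum_congr rfl fun j _ => ?_
        simp [mul_comm]
      have hvw : (inner ℂ v w : ℂ) = 2 * inner ℂ (Pmap k l z) w := by
        rw [hvdef, inner_sub_left, inner_smul_left, inner_smul_left, hw]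
        simp [Complex.conj_ofReal, map_ofNat]
      rw [hφval, hw, hw', hPc, hvw]
      have h2a : ((2:ℂ) * (inner ℂ (Pmap k l z) w : ℂ)).re
          = 2 * (inner ℂ (Pmap k l z) w : ℂ).re := by
        simp [Complex.mul_re]
      rw [h2a, Complex.add_re, Complex.conj_re]
      simp only [zero_add, Complex.zero_re, mul_zero, sub_zero]
      ring
    have hvv : (inner ℂ v v : ℂ) = ((4 * (1 - S) * S : ℝ) : ℂ) := by
      rw [hvdef]
      simp only [inner_sub_left, inner_sub_right, inner_smul_left, inner_smul_right,
        Pmap_inner_Pmap, Pmap_inner_self, inner_Pmap_self, hzz, ← hSdef,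
        Complex.conj_ofReal, map_ofNat]
      push_cast; ring
    -- dimension count and surjectivity of the horizontal differential
    have hinj : ∀ w ∈ (ℂ ∙ z)ᗮ, (mfderiv 𝓘(ℝ, Esp k l) 𝓘(ℝ, EV) π z) w = 0 → w = 0 := by
      intro w hw h0
      have hw0 : (inner ℂ z w : ℂ) = 0 :=
        Submodule.mem_orthogonal_singleton_iff_inner_right.mp hw
      have := hFS z hz1 w w hw0 hw0
      rw [h0] at this
      change D.g (π z) 0 0 = _ at this
      simp only [map_zero, ContinuousLinearMap.zero_apply] at this
      have hnorm : ‖w‖^2 = 0 := by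
        rw [← inner_self_eq_norm_sq (𝕜 := ℂ)]; exact this.symm
      rwa [pow_eq_zero_iff (by norm_num), norm_eq_zero] at hnorm
    have hrk : Module.finrank ℝ ↥((ℂ ∙ z)ᗮ) = Module.finrank ℝ EV := by
      have h1 : Module.finrank ℂ (ℂ ∙ z) = 1 := finrank_span_singleton hz0
      have h2 := Submodule.finrank_add_finrank_orthogonal (𝕜 := ℂ) (ℂ ∙ z)
      have h3 : Module.finrank ℂ (Esp k l) = (k+1) + (l+1) := by
        simp [finrank_euclideanSpace]
      have h4 := Module.finrank_mul_finrank (F := ℝ) (K := ℂ) (A := ↥((ℂ ∙ z)ᗮ))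
      rw [Complex.finrank_real_complex] at h4
      rw [hdim, hm]
      omega
    have hsurj : ∀ u : EV, ∃ w ∈ (ℂ ∙ z)ᗮ,
        (mfderiv 𝓘(ℝ, Esp k l) 𝓘(ℝ, EV) π z) w = u :=
      surj_aux (EV := EV) ((ℂ ∙ z)ᗮ)
        (fun w => ((mfderiv 𝓘(ℝ, Esp k l) 𝓘(ℝ, EV) π z) w : EV))
        (fun a b => (mfderiv 𝓘(ℝ, Esp k l) 𝓘(ℝ, EV) π z).map_add a b)
        (fun c a => (mfderiv 𝓘(ℝ, Esp k l) 𝓘(ℝ, EV) π z).map_smul c a)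
        hinj hrk
    -- identify the gradient
    have hvmem : v ∈ (ℂ ∙ z)ᗮ :=
      Submodule.mem_orthogonal_singleton_iff_inner_right.mpr hvz
    have hDv : ∃ Dv : EV, Dv = mfderiv 𝓘(ℝ, Esp k l) 𝓘(ℝ, EV) π z v := ⟨_, rfl⟩
    obtain ⟨Dv, hDv⟩ := hDv
    have hgrad : D.grad τ (π z) = Dv := by
      by_contra hne
      have hne' : D.grad τ (π z) - Dv ≠ 0 := sub_ne_zero.mpr hne
      have hpos := D.g_posdef (π z) _ hne'
      obtain ⟨w, hwmem, hw⟩ := hsurj (D.grad τ (π z) - Dv)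
      have hw0 : (inner ℂ z w : ℂ) = 0 :=
        Submodule.mem_orthogonal_singleton_iff_inner_right.mp hwmem
      have hDw : ∃ Dw : EV, Dw = mfderiv 𝓘(ℝ, Esp k l) 𝓘(ℝ, EV) π z w := ⟨_, rfl⟩
      obtain ⟨Dw, hDw⟩ := hDw
      rw [← hDw] at hw
      have e1 : D.g (π z) (D.grad τ (π z)) Dw = (inner ℂ v w : ℂ).re := by
        rw [D.grad_spec τ hτ]
        show mfderiv 𝓘(ℝ, EV) 𝓘(ℝ, ℝ) τ (π z) Dw = _
        rw [hDw, hkey w, hφhor w hw0]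
      have e2 : D.g (π z) Dv Dw = (inner ℂ v w : ℂ).re := by
        rw [hDv, hDw]; exact hFS z hz1 v w hvz hw0
      have e3 : D.g (π z) (D.grad τ (π z) - Dv) Dw = 0 := by
        rw [map_sub]
        simp only [ContinuousLinearMap.sub_apply]
        rw [e1, e2, sub_self]
      rw [hw] at e3
      rw [e3] at hpos
      exact lt_irrefl _ hpos
    have efin : D.g (π z) Dv Dv = (inner ℂ v v : ℂ).re := by
      rw [hDv]; exact hFS z hz1 v v hvz hvz
    rw [hgrad, efin, hvv, Complex.ofReal_re, htau]
  -- part 1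
  have key : ∀ x : M, D.g x (D.grad τ x) (D.grad τ x) = 4 * (1 - τ x) * τ x := by
    intro x
    obtain ⟨z, hz1, rfl⟩ := norm1 x
    exact grad_eq z hz1
  refine ⟨key, ?_, ?_, ?_⟩
  -- part 2: geodesic gradient
  · intro x a b
    have hGfun : (fun y => D.g y (D.grad τ y) (D.grad τ y))
        = (fun t : ℝ => 4 * (1 - t) * t) ∘ τ := by
      funext y; exact key y
    have hh : ∀ t : ℝ, HasDerivAt (fun s : ℝ => 4 * (1 - s) * s) (4 - 8 * t) t := by
      intro t
      have h1 : HasDerivAt (fun s : ℝ => 4 * (1 - s)) (4 * (-1)) t :=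
        ((hasDerivAt_id t).const_sub 1).const_mul 4
      have h2 := h1.mul (hasDerivAt_id t)
      simp only [id_eq, mul_one] at h2
      exact h2.congr_deriv (by ring)
    have hhd : MDifferentiableAt 𝓘(ℝ, ℝ) 𝓘(ℝ, ℝ) (fun t : ℝ => 4 * (1 - t) * t) (τ x) :=
      ((hh (τ x)).differentiableAt).mdifferentiableAt
    have hcomp := mfderiv_comp (I' := 𝓘(ℝ, ℝ)) x hhd ((hτ x).mdifferentiableAt (by simp))
    have hfder : mfderiv 𝓘(ℝ, ℝ) 𝓘(ℝ, ℝ) (fun t : ℝ => 4 * (1 - t) * t) (τ x)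
        = fderiv ℝ (fun t : ℝ => 4 * (1 - t) * t) (τ x) := mfderiv_eq_fderiv
    have hfval : ∀ r : ℝ, fderiv ℝ (fun t : ℝ => 4 * (1 - t) * t) (τ x) r
        = r * (4 - 8 * τ x) := by
      intro r
      rw [(hasDerivAt_iff_hasFDerivAt.mp (hh (τ x))).fderiv]
      simp [smul_eq_mul]
    have hG : ∀ w : EV, mdiff (fun y => D.g y (D.grad τ y) (D.grad τ y)) x w
        = mdiff τ x w * (4 - 8 * τ x) := by
      intro w
      show mfderiv 𝓘(ℝ, EV) 𝓘(ℝ, ℝ) (fun y => D.g y (D.grad τ y) (D.grad τ y)) x w = _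
      rw [hGfun, hcomp]
      show (mfderiv 𝓘(ℝ, ℝ) 𝓘(ℝ, ℝ) (fun t : ℝ => 4 * (1 - t) * t) (τ x))
          ((mfderiv 𝓘(ℝ, EV) 𝓘(ℝ, ℝ) τ x) w) = _
      rw [hfder]
      exact hfval ((mfderiv 𝓘(ℝ, EV) 𝓘(ℝ, ℝ) τ x) w)
    rw [hG a, hG b]
    ring
  -- part 3: critical set
  · ext x
    simp only [Set.mem_setOf_eq, Set.mem_union]
    constructor
    · intro h0
      have hval := key x
      rw [h0] at hval
      simp only [map_zero, ContinuousLinearMap.zero_apply] at hval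
      obtain ⟨z, hz0, rfl⟩ := hπsurj x
      have hnz : (0:ℝ) < ‖z‖ := norm_pos_iff.mpr hz0
      have hsplit := norm_sq_split k l z
      have hden : 0 < (∑ i : Fin (k+1), ‖z (Sum.inl i)‖^2)
          + ∑ j : Fin (l+1), ‖z (Sum.inr j)‖^2 := by nlinarith
      have htz := hτdef z hz0
      rcases mul_eq_zero.mp hval.symm with h | h
      · rcases mul_eq_zero.mp h with h4 | h1
        · norm_num at h4
        · right
          have ht1 : τ (π z) = 1 := by linarith
          rw [htz] at ht1
          have hSeq := (div_eq_one_iff_eq (ne_of_gt hden)).mp ht1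
          have hT0 : (∑ i : Fin (k+1), ‖z (Sum.inl i)‖^2) = 0 := by linarith
          refine ⟨z, ⟨hz0, fun i => ?_⟩, rfl⟩
          have hterm := (Finset.sum_eq_zero_iff_of_nonneg
            (fun i _ => by positivity)).mp hT0 i (Finset.mem_univ i)
          exact norm_eq_zero.mp (pow_eq_zero_iff (by norm_num) |>.mp hterm)
      · left
        rw [htz] at h
        have hS0 : (∑ j : Fin (l+1), ‖z (Sum.inr j)‖^2) = 0 := by
          rcases div_eq_zero_iff.mp h with h' | h'
          · exact h'
          · exact absurd h' (ne_of_gt hden)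
        refine ⟨z, ⟨hz0, fun j => ?_⟩, rfl⟩
        have hterm := (Finset.sum_eq_zero_iff_of_nonneg
          (fun j _ => by positivity)).mp hS0 j (Finset.mem_univ j)
        exact norm_eq_zero.mp (pow_eq_zero_iff (by norm_num) |>.mp hterm)
    · have tau_zero : ∀ z : Esp k l, z ≠ 0 → (∀ j : Fin (l+1), z (Sum.inr j) = 0) →
          τ (π z) = 0 := by
        intro z hz0 hy
        rw [hτdef z hz0]
        have hS : (∑ j : Fin (l+1), ‖z (Sum.inr j)‖^2) = 0 :=
          Finset.sum_eq_zero (fun j _ => by rw [hy j]; simp)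
        rw [hS, zero_div]
      have tau_one : ∀ z : Esp k l, z ≠ 0 → (∀ i : Fin (k+1), z (Sum.inl i) = 0) →
          τ (π z) = 1 := by
        intro z hz0 hx
        rw [hτdef z hz0]
        have hT : (∑ i : Fin (k+1), ‖z (Sum.inl i)‖^2) = 0 :=
          Finset.sum_eq_zero (fun i _ => by rw [hx i]; simp)
        rw [hT, zero_add]
        apply div_self
        intro hS
        apply hz0
        have hsplit := norm_sq_split k l z
        rw [hT, hS, add_zero] at hsplit
        exact norm_eq_zero.mp (pow_eq_zero_iff (by norm_num) |>.mp hsplit)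
      rintro (⟨z, ⟨hz0, hy⟩, rfl⟩ | ⟨z, ⟨hz0, hx⟩, rfl⟩)
      · by_contra hne
        have hpos := D.g_posdef (π z) _ hne
        rw [key (π z), tau_zero z hz0 hy] at hpos
        norm_num at hpos
      · by_contra hne
        have hpos := D.g_posdef (π z) _ hne
        rw [key (π z), tau_one z hz0 hx] at hpos
        norm_num at hpos
  · rw [Set.disjoint_left]
    rintro x ⟨z, ⟨hz0, hy⟩, rfl⟩ ⟨z', ⟨hz0', hx⟩, hπz'⟩
    have ht0 : τ (π z) = 0 := by
      rw [hτdef z hz0]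
      have hS : (∑ j : Fin (l+1), ‖z (Sum.inr j)‖^2) = 0 :=
        Finset.sum_eq_zero (fun j _ => by rw [hy j]; simp)
      rw [hS, zero_div]
    have ht1 : τ (π z') = 1 := by
      rw [hτdef z' hz0']
      have hT : (∑ i : Fin (k+1), ‖z' (Sum.inl i)‖^2) = 0 :=
        Finset.sum_eq_zero (fun i _ => by rw [hx i]; simp)
      rw [hT, zero_add]
      apply div_self
      intro hS
      apply hz0'
      have hsplit := norm_sq_split k l z'
      rw [hT, hS, add_zero] at hsplit
      exact norm_eq_zero.mp (pow_eq_zero_iff (by norm_num) |>.mp hsplit)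
    rw [hπz'] at ht1
    rw [ht0] at ht1
    norm_num at ht1

end
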